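/- arXiv:2108.01485 — 2 statements merged into one kernel-verified Lean document; each statement's English description precedes it below -/
import Mathlib

section
/- In the setting of the feature-selection process (choose S₀ uniformly among n_target-subsets of S' = {1,…,n_useful}, then s uniform on S₀ with probability p and uniform on S∖S₀ with probability 1−p), if p > n_target/n_feature then for every feature i ∈ S' the probability that s = i is strictly greater than 1/n_feature; if p < n_target/n_feature, it is strictly less than 1/n_feature. -/
open Finset

noncomputable def selectProb (nFeature nUseful nTarget : ℕ) (p : ℝ) (i : ℕ) : ℝ :=
  (((Finset.Icc 1 nUseful).powersetCard nTarget).card : ℝ)⁻¹ *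
    ∑ S₀ ∈ (Finset.Icc 1 nUseful).powersetCard nTarget,
      (p * (if i ∈ S₀ then ((nTarget : ℝ))⁻¹ else 0) +
       (1 - p) * (if i ∈ S₀ then 0 else ((nFeature : ℝ) - (nTarget : ℝ))⁻¹))

lemma card_filter_mem_powersetCard (s : Finset ℕ) (i : ℕ) (hi : i ∈ s) (k : ℕ) (hk : 0 < k) :
    ((s.powersetCard k).filter (fun t => i ∈ t)).card = (s.card - 1).choose (k - 1) := by
  rw [← Finset.card_erase_of_mem hi, ← Finset.card_powersetCard]
  refine Finset.card_bij' (fun t _ => t.erase i) (fun t _ => insert i t) ?_ ?_ ?_ ?_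
  · intro t ht
    simp only [mem_filter, mem_powersetCard] at ht
    simp only [mem_powersetCard]
    exact ⟨Finset.erase_subset_erase i ht.1.1, by rw [Finset.card_erase_of_mem ht.2, ht.1.2]⟩
  · intro t ht
    simp only [mem_powersetCard] at ht
    simp only [mem_filter, mem_powersetCard, Finset.mem_insert]
    have hit : i ∉ t := fun h => (Finset.mem_erase.1 (ht.1 h)).1 rfl
    refine ⟨⟨?_, ?_⟩, by simp⟩
    · intro x hx
      rcases Finset.mem_insert.1 hx with rfl | hx
      · exact hi
      · exact (Finset.mem_erase.1 (ht.1 hx)).2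
    · rw [Finset.card_insert_of_notMem hit, ht.2, Nat.sub_add_cancel hk]
  · intro t ht
    simp only [mem_filter] at ht
    exact Finset.insert_erase ht.2
  · intro t ht
    simp only [mem_powersetCard] at ht
    exact Finset.erase_insert (fun h => (Finset.mem_erase.1 (ht.1 h)).1 rfl)

lemma selectProb_eq (nFeature nUseful nTarget : ℕ) (p : ℝ)
    (ht : 0 < nTarget) (htu : nTarget ≤ nUseful) (huf : nUseful < nFeature)
    (i : ℕ) (hi : i ∈ Finset.Icc 1 nUseful) :
    selectProb nFeature nUseful nTarget p i =
      p / nUseful + (1 - p) * ((nUseful : ℝ) - nTarget) / (nUseful * ((nFeature : ℝ) - nTarget)) := by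
  have hcard : (Finset.Icc 1 nUseful).card = nUseful := by simp
  set s := Finset.Icc 1 nUseful
  set k := nTarget
  have hM := card_filter_mem_powersetCard s i hi k ht
  rw [hcard] at hM
  have hNcard : (s.powersetCard k).card = nUseful.choose k := by rw [Finset.card_powersetCard, hcard]
  set N : ℕ := nUseful.choose k with hN
  set M : ℕ := (nUseful - 1).choose (k - 1) with hMdef
  have hkey : k * N = nUseful * M := by
    rw [hN, hMdef]
    obtain ⟨k', rfl⟩ := Nat.exists_eq_succ_of_ne_zero ht.ne'
    obtain ⟨n', rfl⟩ := Nat.exists_eq_succ_of_ne_zero (ht.trans_le htu).ne'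
    simp only [Nat.succ_sub_one]
    rw [mul_comm, Nat.add_one_mul_choose_eq, mul_comm]
    exact mul_comm _ _
  have hNpos : 0 < N := Nat.choose_pos htu
  have hMN : M ≤ N := by
    rw [← hM, ← hNcard]; exact Finset.card_filter_le _ _
  unfold selectProb
  rw [Finset.sum_add_distrib]
  have h1 : ∑ S₀ ∈ s.powersetCard k, p * (if i ∈ S₀ then ((k : ℝ))⁻¹ else 0)
      = (M : ℝ) * (p * (k : ℝ)⁻¹) := by
    simp only [mul_ite, mul_zero]
    rw [Finset.sum_ite, Finset.sum_const, Finset.sum_const, smul_zero, add_zero, hM]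
    simp [hMdef]
  have h2 : ∑ S₀ ∈ s.powersetCard k, (1 - p) * (if i ∈ S₀ then 0 else ((nFeature : ℝ) - (k : ℝ))⁻¹)
      = ((N : ℝ) - M) * ((1 - p) * ((nFeature : ℝ) - (k : ℝ))⁻¹) := by
    simp only [mul_ite, mul_zero]
    rw [Finset.sum_ite, Finset.sum_const, Finset.sum_const, smul_zero, zero_add]
    rw [Finset.filter_not, Finset.card_sdiff_of_subset (Finset.filter_subset _ _), hM, hNcard]
    rw [nsmul_eq_mul, Nat.cast_sub hMN]
  rw [h1, h2, hNcard]
  have hkR : (0:ℝ) < k := by exact_mod_cast ht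
  have hnR : (0:ℝ) < nUseful := by exact_mod_cast ht.trans_le htu
  have hFk : (0:ℝ) < (nFeature : ℝ) - k := by
    have : (k:ℝ) < nFeature := by exact_mod_cast htu.trans_lt huf
    linarith
  have hNR : (0:ℝ) < N := by exact_mod_cast hNpos
  have hkeyR : (k : ℝ) * N = nUseful * M := by exact_mod_cast hkey
  have hMR : (M : ℝ) = k * N / nUseful := by
    field_simp
    linarith [hkeyR]
  rw [hMR]
  field_simp

/-- Theorem 1 of the paper. -/
theorem selectProb_vs_uniform (nFeature nUseful nTarget : ℕ) (p : ℝ)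
    (ht : 0 < nTarget) (htu : nTarget ≤ nUseful) (huf : nUseful < nFeature)
    (hp0 : 0 ≤ p) (hp1 : p ≤ 1) (i : ℕ) (hi : i ∈ Finset.Icc 1 nUseful) :
    (p > (nTarget : ℝ) / nFeature →
      selectProb nFeature nUseful nTarget p i > 1 / nFeature) ∧
    (p < (nTarget : ℝ) / nFeature →
      selectProb nFeature nUseful nTarget p i < 1 / nFeature) := by
  rw [selectProb_eq nFeature nUseful nTarget p ht htu huf i hi]
  have hnR : (0:ℝ) < nUseful := by exact_mod_cast ht.trans_le htu
  have hFR : (0:ℝ) < nFeature := by exact_mod_cast ht.trans_le (htu.trans huf.le)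
  have hFk : (0:ℝ) < (nFeature : ℝ) - nTarget := by
    have : (nTarget:ℝ) < nFeature := by exact_mod_cast htu.trans_lt huf
    linarith
  have hFn : (0:ℝ) < (nFeature : ℝ) - nUseful := by
    have : (nUseful:ℝ) < nFeature := by exact_mod_cast huf
    linarith
  have key : p / nUseful + (1 - p) * ((nUseful : ℝ) - nTarget) / (nUseful * ((nFeature : ℝ) - nTarget))
      = (p * ((nFeature:ℝ) - nTarget) + (1 - p) * ((nUseful:ℝ) - nTarget)) /
        (nUseful * ((nFeature : ℝ) - nTarget)) := by
    field_simp
  rw [key]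
  constructor
  · intro hp
    rw [gt_iff_lt, div_lt_iff₀ hFR] at hp
    rw [gt_iff_lt, div_lt_div_iff₀ hFR (mul_pos hnR hFk)]
    nlinarith [mul_pos (sub_pos.2 hp) hFn]
  · intro hp
    rw [lt_div_iff₀ hFR] at hp
    exact (div_lt_div_iff₀ (mul_pos hnR hFk) hFR).2
      (by nlinarith [mul_pos (sub_pos.2 hp) hFn])
end

section
/- Let h(p) = p/n_useful + (1−p)(n_useful − n_target)/(n_useful(n_feature − n_target)) − 1/n_feature, with positive integers n_target ≤ n_useful < n_feature. Then h is an affine function of p with positive slope, and h(p) > 0 ⟺ p > n_target/n_feature, h(p) = 0 ⟺ p = n_target/n_feature, h(p) < 0 ⟺ p < n_target/n_feature. -/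
/-- Full trichotomy of Theorem 1: `h(p)` is affine in `p` with positive slope
`(nFeature - nUseful)/(nUseful (nFeature - nTarget))`, and its sign matches the comparison
of `p` with `nTarget/nFeature`. -/
theorem selectProb_trichotomy (nFeature nUseful nTarget : ℕ)
    (ht : 0 < nTarget) (htu : nTarget ≤ nUseful) (huf : nUseful < nFeature) :
    (1 / (nUseful : ℝ) - ((nUseful : ℝ) - nTarget) / ((nUseful : ℝ) * ((nFeature : ℝ) - nTarget))
        = ((nFeature : ℝ) - nUseful) / ((nUseful : ℝ) * ((nFeature : ℝ) - nTarget)) ∧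
      0 < ((nFeature : ℝ) - nUseful) / ((nUseful : ℝ) * ((nFeature : ℝ) - nTarget))) ∧
    ∀ p : ℝ,
      (p / nUseful + (1 - p) * ((nUseful : ℝ) - nTarget) /
            ((nUseful : ℝ) * ((nFeature : ℝ) - nTarget)) - 1 / nFeature > 0
          ↔ p > (nTarget : ℝ) / nFeature) ∧
      (p / nUseful + (1 - p) * ((nUseful : ℝ) - nTarget) /
            ((nUseful : ℝ) * ((nFeature : ℝ) - nTarget)) - 1 / nFeature = 0
          ↔ p = (nTarget : ℝ) / nFeature) ∧
      (p / nUseful + (1 - p) * ((nUseful : ℝ) - nTarget) /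
            ((nUseful : ℝ) * ((nFeature : ℝ) - nTarget)) - 1 / nFeature < 0
          ↔ p < (nTarget : ℝ) / nFeature) := by
  have hu : (0:ℝ) < nUseful := by exact_mod_cast lt_of_lt_of_le ht htu
  have hf : (0:ℝ) < nFeature := lt_trans hu (by exact_mod_cast huf)
  have hft : (0:ℝ) < (nFeature : ℝ) - nTarget := by
    have : (nTarget:ℝ) ≤ nUseful := by exact_mod_cast htu
    have h2 : (nUseful:ℝ) < nFeature := by exact_mod_cast huf
    linarith
  have hfu : (0:ℝ) < (nFeature : ℝ) - nUseful := by
    have h2 : (nUseful:ℝ) < nFeature := by exact_mod_cast huf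
    linarith
  have hden : (0:ℝ) < (nUseful : ℝ) * ((nFeature : ℝ) - nTarget) := mul_pos hu hft
  have hc : 0 < ((nFeature : ℝ) - nUseful) / ((nUseful : ℝ) * ((nFeature : ℝ) - nTarget)) :=
    div_pos hfu hden
  refine ⟨⟨by field_simp; ring, hc⟩, fun p => ?_⟩
  have hkey : p / nUseful + (1 - p) * ((nUseful : ℝ) - nTarget) /
      ((nUseful : ℝ) * ((nFeature : ℝ) - nTarget)) - 1 / nFeature
      = (((nFeature : ℝ) - nUseful) / ((nUseful : ℝ) * ((nFeature : ℝ) - nTarget)))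
        * (p - (nTarget : ℝ) / nFeature) := by
    field_simp
    ring
  rw [hkey]
  constructor
  · constructor
    · intro h; nlinarith
    · intro h; nlinarith
  constructor
  · constructor
    · intro h
      rcases mul_eq_zero.mp h with h1 | h1
      · exact absurd h1 (ne_of_gt hc)
      · linarith
    · intro h; rw [h]; ring
  · constructor
    · intro h; nlinarith
    · intro h; nlinarith
end
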